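/- arXiv:2311.03877 — 7 statements merged into one kernel-verified Lean document; each statement's English description precedes it below -/
import Mathlib

section
/- Let T = (V, E, B, σ) be a 𝒞-consistent branching tree. Then for every x ∈ ⋂𝒞 there exists exactly one leaf v ∈ V (a node with no children) such that x ∈ ⋂(𝒞 ∪ ℬ_v). -/
open Set

/-- Apply a signed index list (index, sign) to a point, giving the vector
`(sign(i₁)·x_{|i₁|}, …, sign(i_k)·x_{|i_k|})` as a list of reals.
`true` encodes a positive sign, `false` a negative sign. -/
def sigApply {n : ℕ} (σ : List (Fin n × Bool)) (x : Fin n → ℝ) : List ℝ :=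
  σ.map (fun p => if p.2 then x p.1 else -(x p.1))

/-- Strict ε-lexicographic order `x ≻_ε y` on lists of reals:
`x ≠ y` and, at the first index where they differ, `x i ≥ y i + ε`. -/
def lexGt (ε : ℝ) : List ℝ → List ℝ → Prop
  | a :: as, b :: bs => (a = b ∧ lexGt ε as bs) ∨ (a ≠ b ∧ b + ε ≤ a)
  | _, _ => False

/-- A branching tree `T = (V, E, B, σ)`: a finite arborescence (encoded by a
parent map from which every node reaches the root), a branching constraint
`B v ⊆ ℝⁿ` for every node with `B r = ℝⁿ`, and a list `σ v` of signed variable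
indices with pairwise distinct absolute values for every node. -/
structure BranchingTree (n : ℕ) where
  V : Type
  fin : Fintype V
  root : V
  parent : V → Option V
  parent_root : parent root = none
  parent_isSome : ∀ v, v ≠ root → (parent v).isSome
  reach_root : ∀ v, Relation.ReflTransGen (fun a b => parent a = some b) v root
  B : V → Set (Fin n → ℝ)
  B_root : B root = Set.univ
  sig : V → List (Fin n × Bool)
  sig_nodup : ∀ v, ((sig v).map Prod.fst).Nodup

namespace BranchingTree

variable {n : ℕ} (T : BranchingTree n)

/-- The set of children `δ⁺(u)` of a node. -/
def children (u : T.V) : Set T.V := {v | T.parent v = some u}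

/-- A leaf is a node without children. -/
def IsLeaf (v : T.V) : Prop := T.children v = ∅

/-- The nodes on the root-to-`v` path (the ancestors of `v`, including `v`). -/
def pathNodes (v : T.V) : Set T.V :=
  {u | Relation.ReflTransGen (fun a b => T.parent a = some b) v u}

/-- `ℬ_v`: the branching constraints attached to the nodes on the root-to-`v` path. -/
def pathCons (v : T.V) : Set (Set (Fin n → ℝ)) := T.B '' T.pathNodes v

/-- Depth of a node: the number of nodes on its root path. -/
noncomputable def depth (v : T.V) : ℕ := (T.pathNodes v).ncard

/-- The feasible region `⋂(𝒞 ∪ ℬ_v)` of node `v`. -/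
def region (𝒞 : Set (Set (Fin n → ℝ))) (v : T.V) : Set (Fin n → ℝ) :=
  ⋂₀ (𝒞 ∪ T.pathCons v)

/-- `T` is `𝒞`-consistent: (T3) the children of any non-leaf cover `⋂𝒞`;
(T5) `σ u` is a prefix of `σ v` for every child `v` of `u`;
(T6) every entry of `σ v (x)` is bounded above over `x ∈ ⋂𝒞`;
(T7) distinct children of `u` have `σ u`-disjoint branching constraints. -/
def Consistent (𝒞 : Set (Set (Fin n → ℝ))) : Prop :=
  (∀ u : T.V, (T.children u).Nonempty → ⋂₀ 𝒞 ⊆ ⋃ v ∈ T.children u, T.B v) ∧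
  (∀ u v : T.V, v ∈ T.children u → T.sig u <+: T.sig v) ∧
  (∀ v : T.V, ∀ i : Fin (T.sig v).length,
    BddAbove ((fun x => if ((T.sig v).get i).2 then x ((T.sig v).get i).1
      else -(x ((T.sig v).get i).1)) '' ⋂₀ 𝒞)) ∧
  (∀ u v w : T.V, v ∈ T.children u → w ∈ T.children u → v ≠ w →
    sigApply (T.sig u) '' T.B v ∩ sigApply (T.sig u) '' T.B w = ∅)

/-- `v` is a deepest common node `dcn(x,y)`: both `x` and `y` lie in the
feasible region of `v`, and `v` is deepest with this property. -/
def IsDCN (𝒞 : Set (Set (Fin n → ℝ))) (v : T.V) (x y : Fin n → ℝ) : Prop :=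
  x ∈ T.region 𝒞 v ∧ y ∈ T.region 𝒞 v ∧
  ∀ w : T.V, x ∈ T.region 𝒞 w → y ∈ T.region 𝒞 w → T.depth w ≤ T.depth v

/-- `x ⪰_T y` : with `v = dcn(x,y)`, `σ v (x) = σ v (y)` or `σ v (x) ≻_ε σ v (y)`. -/
def TreeGe (𝒞 : Set (Set (Fin n → ℝ))) (ε : ℝ) (x y : Fin n → ℝ) : Prop :=
  ∃ v : T.V, T.IsDCN 𝒞 v x y ∧
    (sigApply (T.sig v) x = sigApply (T.sig v) y ∨
      lexGt ε (sigApply (T.sig v) x) (sigApply (T.sig v) y))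

/-- `x ≻_{ε,T} y` : with `v = dcn(x,y)`, `σ v (x) ≻_ε σ v (y)`. -/
def TreeGt (𝒞 : Set (Set (Fin n → ℝ))) (ε : ℝ) (x y : Fin n → ℝ) : Prop :=
  ∃ v : T.V, T.IsDCN 𝒞 v x y ∧
    lexGt ε (sigApply (T.sig v) x) (sigApply (T.sig v) y)

end BranchingTree

/-- A configuration `(𝒞, 𝒟, g, z, T, ε)`. -/
structure Config (n : ℕ) where
  core : Set (Set (Fin n → ℝ))
  derived : Set (Set (Fin n → ℝ))
  g : (Fin n → ℝ) → ℝ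
  z : WithTop ℝ
  tree : BranchingTree n
  eps : ℝ

/-- `(F, f)`-validity of a configuration: (V1) the tree is core-consistent and
`ε > 0`; (V2) if `z < ∞` there is `x ∈ F` with `f x ≤ z`; (V3) for every real
`ẑ < z`, `F` contains a point of `f`-value `≤ ẑ` iff `⋂𝒞` contains a point of
`g`-value `≤ ẑ`; (V4) every `x ∈ ⋂𝒞` with `g x < z` is dominated by some
`y ∈ ⋂(𝒞 ∪ 𝒟)` with `y ⪰_T x` and `g y ≤ g x`. -/
def Config.Valid {n : ℕ} (F : Set (Fin n → ℝ)) (f : (Fin n → ℝ) → ℝ)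
    (K : Config n) : Prop :=
  (K.tree.Consistent K.core ∧ 0 < K.eps) ∧
  (K.z < ⊤ → ∃ x ∈ F, (f x : WithTop ℝ) ≤ K.z) ∧
  (∀ zh : ℝ, (zh : WithTop ℝ) < K.z →
    ((∃ x ∈ F, f x ≤ zh) ↔ ∃ x ∈ ⋂₀ K.core, K.g x ≤ zh)) ∧
  (∀ x ∈ ⋂₀ K.core, (K.g x : WithTop ℝ) < K.z →
    ∃ y ∈ ⋂₀ (K.core ∪ K.derived), K.tree.TreeGe K.core K.eps y x ∧ K.g y ≤ K.g x)

/-- The implication constraint `[𝒜 ⇝ C] = (ℝⁿ \ ⋂𝒜) ∪ C`. -/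
def implCon {n : ℕ} (𝒜 : Set (Set (Fin n → ℝ))) (C : Set (Fin n → ℝ)) :
    Set (Fin n → ℝ) := (⋂₀ 𝒜)ᶜ ∪ C


namespace BranchingTree

variable {n : ℕ} (T : BranchingTree n)

/-- The parent step relation. -/
private def st (T : BranchingTree n) (a b : T.V) : Prop := T.parent a = some b

private lemma st_det {a b c : T.V} (h1 : T.st a b) (h2 : T.st a c) : b = c := by
  unfold st at h1 h2; rw [h1] at h2; exact Option.some.inj h2

private lemma no_cycle (v : T.V) : ¬ Relation.TransGen T.st v v := by
  intro hv
  have aux : ∀ a b : T.V, Relation.ReflTransGen T.st a b →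
      Relation.TransGen T.st a a → Relation.TransGen T.st b b := by
    intro a b h
    induction h with
    | refl => exact id
    | tail hab hbc ih =>
      intro h
      have hb := ih h
      rcases (Relation.TransGen.head'_iff).mp hb with ⟨d, hbd, hdb⟩
      have hdc : d = _ := T.st_det hbd hbc
      subst hdc
      exact Relation.TransGen.tail' hdb hbc
  have hroot := aux v T.root (T.reach_root v) hv
  rcases (Relation.TransGen.head'_iff).mp hroot with ⟨d, hd, -⟩
  have : T.parent T.root = some d := hd
  rw [T.parent_root] at this
  exact absurd this.symm (Option.some_ne_none d)

private lemma mem_pathNodes_iff {v w : T.V} :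
    w ∈ T.pathNodes v ↔ Relation.ReflTransGen T.st v w := Iff.rfl

private lemma pathNodes_child {c u : T.V} (hcu : T.st c u) :
    T.pathNodes c = insert c (T.pathNodes u) := by
  ext w
  constructor
  · intro h
    rcases (Relation.ReflTransGen.cases_head h) with h | ⟨d, hcd, hdw⟩
    · exact Or.inl h.symm
    · have : d = u := T.st_det hcd hcu
      subst this
      exact Or.inr hdw
  · rintro (rfl | h)
    · exact Relation.ReflTransGen.refl
    · exact Relation.ReflTransGen.head hcu h

private lemma child_not_mem {c u : T.V} (hcu : T.st c u) : c ∉ T.pathNodes u := by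
  intro h
  exact T.no_cycle c (Relation.TransGen.head' hcu h)

private lemma depth_child {c u : T.V} (hcu : T.st c u) : T.depth c = T.depth u + 1 := by
  haveI := T.fin
  unfold depth
  rw [T.pathNodes_child hcu, Set.ncard_insert_of_notMem (T.child_not_mem hcu) (Set.toFinite _)]

private lemma depth_le (u : T.V) : T.depth u ≤ Nat.card T.V := by
  haveI := T.fin
  calc T.depth u ≤ (Set.univ : Set T.V).ncard :=
        Set.ncard_le_ncard (Set.subset_univ _) Set.finite_univ
    _ = Nat.card T.V := Set.ncard_univ _

private lemma pathNodes_mono {a b : T.V} (h : b ∈ T.pathNodes a) :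
    T.pathNodes b ⊆ T.pathNodes a := by
  intro w hw
  exact Relation.ReflTransGen.trans h hw

private lemma region_mono (𝒞 : Set (Set (Fin n → ℝ))) {a b : T.V}
    (h : b ∈ T.pathNodes a) : T.region 𝒞 a ⊆ T.region 𝒞 b := by
  apply Set.sInter_subset_sInter
  apply Set.union_subset_union_right
  exact Set.image_mono (T.pathNodes_mono h)

private lemma mem_B_of_region {𝒞 : Set (Set (Fin n → ℝ))} {v u : T.V}
    {x : Fin n → ℝ} (hx : x ∈ T.region 𝒞 v) (hu : u ∈ T.pathNodes v) :
    x ∈ T.B u := by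
  exact hx (T.B u) (Or.inr ⟨u, hu, rfl⟩)

private lemma pathNodes_root : T.pathNodes T.root = {T.root} := by
  ext w
  constructor
  · intro h
    rcases (Relation.ReflTransGen.cases_head h) with h | ⟨d, hd, -⟩
    · exact h.symm
    · have : T.parent T.root = some d := hd
      rw [T.parent_root] at this
      exact absurd this.symm (Option.some_ne_none d)
  · rintro rfl
    exact Relation.ReflTransGen.refl

private lemma mem_region_root {𝒞 : Set (Set (Fin n → ℝ))} {x : Fin n → ℝ}
    (hx : x ∈ ⋂₀ 𝒞) : x ∈ T.region 𝒞 T.root := by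
  intro S hS
  rcases hS with hS | ⟨u, hu, rfl⟩
  · exact hx S hS
  · rw [T.pathNodes_root] at hu
    rcases hu with rfl
    rw [T.B_root]
    trivial

private lemma mem_region_child {𝒞 : Set (Set (Fin n → ℝ))} {x : Fin n → ℝ}
    {c u : T.V} (hcu : T.st c u) (hxu : x ∈ T.region 𝒞 u) (hxc : x ∈ T.B c) :
    x ∈ T.region 𝒞 c := by
  intro S hS
  rcases hS with hS | ⟨w, hw, rfl⟩
  · exact hxu S (Or.inl hS)
  · rw [T.pathNodes_child hcu] at hw
    rcases hw with rfl | hw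
    · exact hxc
    · exact hxu (T.B w) (Or.inr ⟨w, hw, rfl⟩)

end BranchingTree

/-- unique leaf: if `T` is a `𝒞`-consistent branching tree,
then every `x ∈ ⋂𝒞` lies in the feasible region `⋂(𝒞 ∪ ℬ_v)` of exactly one
leaf `v` of `T`. -/
theorem unique_leaf {n : ℕ} (𝒞 : Set (Set (Fin n → ℝ))) (T : BranchingTree n)
    (hT : T.Consistent 𝒞) (x : Fin n → ℝ) (hx : x ∈ ⋂₀ 𝒞) :
    ∃! v : T.V, T.IsLeaf v ∧ x ∈ T.region 𝒞 v := by
  classical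
  haveI := T.fin
  -- Existence by descending from the root
  have exist : ∀ k (u : T.V), Nat.card T.V - T.depth u = k →
      x ∈ T.region 𝒞 u → ∃ v, T.IsLeaf v ∧ x ∈ T.region 𝒞 v := by
    intro k
    induction k using Nat.strong_induction_on with
    | _ k IH =>
      intro u hk hxu
      by_cases hleaf : T.IsLeaf u
      · exact ⟨u, hleaf, hxu⟩
      · have hne : (T.children u).Nonempty := by
          rw [Set.nonempty_iff_ne_empty]; exact hleaf
        have hcov := hT.1 u hne hx
        rcases Set.mem_iUnion₂.mp hcov with ⟨c, hc, hxc⟩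
        have hcu : T.st c u := hc
        have hdc : T.depth c = T.depth u + 1 := T.depth_child hcu
        have hdle : T.depth c ≤ Nat.card T.V := T.depth_le c
        exact IH (Nat.card T.V - T.depth c) (by omega) c rfl
          (T.mem_region_child hcu hxu hxc)
  -- Uniqueness
  have uniq : ∀ k (u : T.V), Nat.card T.V - T.depth u = k →
      ∀ v w : T.V, T.IsLeaf v → T.IsLeaf w → x ∈ T.region 𝒞 v → x ∈ T.region 𝒞 w →
        u ∈ T.pathNodes v → u ∈ T.pathNodes w → v = w := by
    intro k
    induction k using Nat.strong_induction_on with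
    | _ k IH =>
      intro u hk v w hv hw hxv hxw huv huw
      by_cases huv' : u = v
      · subst huv'
        rcases Relation.ReflTransGen.cases_tail huw with h | ⟨c, -, hcu⟩
        · exact h
        · exfalso
          have : c ∈ T.children u := hcu
          rw [hv] at this
          exact this
      · by_cases huw' : u = w
        · subst huw'
          rcases Relation.ReflTransGen.cases_tail huv with h | ⟨c, -, hcu⟩
          · exact h.symm
          · exfalso
            have : c ∈ T.children u := hcu
            rw [hw] at this
            exact this
        · rcases Relation.ReflTransGen.cases_tail huv with h | ⟨c, hvc, hcu⟩
          · exact absurd h huv'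
          rcases Relation.ReflTransGen.cases_tail huw with h | ⟨c', hwc', hc'u⟩
          · exact absurd h huw'
          have hxBc : x ∈ T.B c := T.mem_B_of_region hxv hvc
          have hxBc' : x ∈ T.B c' := T.mem_B_of_region hxw hwc'
          have hcc' : c = c' := by
            by_contra hne
            have h7 := hT.2.2.2 u c c' hcu hc'u hne
            have : sigApply (T.sig u) x ∈
                sigApply (T.sig u) '' T.B c ∩ sigApply (T.sig u) '' T.B c' :=
              ⟨⟨x, hxBc, rfl⟩, ⟨x, hxBc', rfl⟩⟩
            rw [h7] at this
            exact this
          subst hcc'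
          have hdc : T.depth c = T.depth u + 1 := T.depth_child hcu
          have hdle : T.depth c ≤ Nat.card T.V := T.depth_le c
          exact IH (Nat.card T.V - T.depth c) (by omega) c rfl
            v w hv hw hxv hxw hvc hwc'
  obtain ⟨v, hv, hxv⟩ := exist (Nat.card T.V - T.depth T.root) T.root rfl
    (T.mem_region_root hx)
  refine ⟨v, ⟨hv, hxv⟩, ?_⟩
  rintro w ⟨hw, hxw⟩
  exact uniq (Nat.card T.V - T.depth T.root) T.root rfl w v hw hv hxw hxv
    (T.reach_root w) (T.reach_root v)
end

section
/- Let (𝒞, 𝒟, g, z, T, ε) be an (F, f)-valid configuration with ∅ ∈ 𝒟. Then there exists no solution x ∈ F with f(x) < z. -/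
open Set

/-- goal configuration: if `(𝒞, 𝒟, g, z, T, ε)` is an
`(F, f)`-valid configuration with `∅ ∈ 𝒟`, then there is no `x ∈ F` with
`f x < z`. -/
theorem goal_config {n : ℕ} (F : Set (Fin n → ℝ)) (f : (Fin n → ℝ) → ℝ)
    (K : Config n) (hV : K.Valid F f) (h : (∅ : Set (Fin n → ℝ)) ∈ K.derived) :
    ¬ ∃ x ∈ F, (f x : WithTop ℝ) < K.z := by
  rintro ⟨x, hxF, hfx⟩
  obtain ⟨_, _, hV3, hV4⟩ := hV
  obtain ⟨x', hx', hgx'⟩ := (hV3 (f x) hfx).mp ⟨x, hxF, le_refl _⟩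
  have hgx'z : (K.g x' : WithTop ℝ) < K.z :=
    lt_of_le_of_lt (by exact_mod_cast hgx') hfx
  obtain ⟨y, hy, -⟩ := hV4 x' hx' hgx'z
  exact hy ∅ (Set.mem_union_right _ h)
end

section
/- (Implicational derivation rule.) Let (𝒞, 𝒟, g, z, T, ε) be an (F, f)-valid configuration, let C ⊆ ℝ^n, and let 𝒜 be a set of constraints. If C ⊇ ⋂(𝒞 ∪ 𝒟 ∪ 𝒜) ∩ {x ∈ ℝ^n : g(x) < z}, then (𝒞, 𝒟 ∪ {[𝒜 ⇝ C]}, g, z, T, ε) is also (F, f)-valid. -/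
open Set

/-- implicational derivation rule: if `(𝒞, 𝒟, g, z, T, ε)` is
`(F, f)`-valid and `C ⊇ ⋂(𝒞 ∪ 𝒟 ∪ 𝒜) ∩ {x : g x < z}`, then
`(𝒞, 𝒟 ∪ {[𝒜 ⇝ C]}, g, z, T, ε)` is also `(F, f)`-valid. -/
theorem implicational_derivation {n : ℕ} (F : Set (Fin n → ℝ))
    (f : (Fin n → ℝ) → ℝ) (K : Config n) (hV : K.Valid F f)
    (C : Set (Fin n → ℝ)) (𝒜 : Set (Set (Fin n → ℝ)))
    (h : ⋂₀ (K.core ∪ K.derived ∪ 𝒜) ∩ {x | (K.g x : WithTop ℝ) < K.z} ⊆ C) :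
    Config.Valid F f
      { core := K.core, derived := insert (implCon 𝒜 C) K.derived,
        g := K.g, z := K.z, tree := K.tree, eps := K.eps } := by
  obtain ⟨h1, h2, h3, h4⟩ := hV
  refine ⟨h1, h2, h3, ?_⟩
  intro x hx hgx
  obtain ⟨y, hy, hge, hgle⟩ := h4 x hx hgx
  refine ⟨y, ?_, hge, hgle⟩
  intro S hS
  rcases hS with hS | hS
  · exact hy S (Or.inl hS)
  · rcases hS with rfl | hS
    · by_cases hA : y ∈ ⋂₀ 𝒜
      · right
        apply h
        refine ⟨?_, ?_⟩
        · intro S hS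
          rcases hS with (hS | hS) | hS
          · exact hy S (Or.inl hS)
          · exact hy S (Or.inr hS)
          · exact hA S hS
        · exact lt_of_le_of_lt (by exact_mod_cast hgle) hgx
      · exact Or.inl hA
    · exact hy S (Or.inr hS)
end

section
/- (Resolution rule.) Let (𝒞, 𝒟, g, z, T, ε) be an (F, f)-valid configuration. Let A_1, A_2, C_1, C_2 ⊆ ℝ^n and let 𝒜_1, 𝒜_2 be sets of constraints such that [(𝒜_1 ∪ {A_1}) ⇝ C_1] ∈ 𝒞 ∪ 𝒟, [(𝒜_2 ∪ {A_2}) ⇝ C_2] ∈ 𝒞 ∪ 𝒟, and A_1 ∪ A_2 ⊇ ⋂(𝒞 ∪ 𝒟). Then (𝒞, 𝒟 ∪ {[(𝒜_1 ∪ 𝒜_2) ⇝ (C_1 ∪ C_2)]}, g, z, T, ε) is also (F, f)-valid. -/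
open Set

/-- resolution rule: if `(𝒞, 𝒟, g, z, T, ε)` is `(F, f)`-valid,
`[(𝒜₁ ∪ {A₁}) ⇝ C₁] ∈ 𝒞 ∪ 𝒟`, `[(𝒜₂ ∪ {A₂}) ⇝ C₂] ∈ 𝒞 ∪ 𝒟`, and
`A₁ ∪ A₂ ⊇ ⋂(𝒞 ∪ 𝒟)`, then `(𝒞, 𝒟 ∪ {[(𝒜₁ ∪ 𝒜₂) ⇝ (C₁ ∪ C₂)]}, g, z, T, ε)`
is also `(F, f)`-valid. -/
theorem resolution {n : ℕ} (F : Set (Fin n → ℝ)) (f : (Fin n → ℝ) → ℝ)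
    (K : Config n) (hV : K.Valid F f)
    (A₁ A₂ C₁ C₂ : Set (Fin n → ℝ)) (𝒜₁ 𝒜₂ : Set (Set (Fin n → ℝ)))
    (h1 : implCon (insert A₁ 𝒜₁) C₁ ∈ K.core ∪ K.derived)
    (h2 : implCon (insert A₂ 𝒜₂) C₂ ∈ K.core ∪ K.derived)
    (h3 : ⋂₀ (K.core ∪ K.derived) ⊆ A₁ ∪ A₂) :
    Config.Valid F f
      { core := K.core, derived := insert (implCon (𝒜₁ ∪ 𝒜₂) (C₁ ∪ C₂)) K.derived,
        g := K.g, z := K.z, tree := K.tree, eps := K.eps } := by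
  obtain ⟨hV1, hV2, hV3, hV4⟩ := hV
  refine ⟨hV1, hV2, hV3, ?_⟩
  intro x hx hgx
  obtain ⟨y, hy, hge, hle⟩ := hV4 x hx hgx
  refine ⟨y, ?_, hge, hle⟩
  intro S hS
  rcases hS with hS | hS
  · exact hy S (Or.inl hS)
  · rcases hS with rfl | hS
    · by_cases hA : y ∈ ⋂₀ (𝒜₁ ∪ 𝒜₂)
      · right
        rcases h3 hy with h | h
        · left
          rcases hy _ h1 with hc | hc
          · exact absurd (fun S hS => by
              rcases hS with rfl | hS
              · exact h
              · exact hA S (Or.inl hS)) hc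
          · exact hc
        · right
          rcases hy _ h2 with hc | hc
          · exact absurd (fun S hS => by
              rcases hS with rfl | hS
              · exact h
              · exact hA S (Or.inr hS)) hc
          · exact hc
      · left; exact hA
    · exact hy S (Or.inr hS)
end

section
/- (Objective bound update rule.) Let (𝒞, 𝒟, g, z, T, ε) be an (F, f)-valid configuration and let x ∈ ⋂𝒞 with g(x) = z' < z. Then (𝒞, 𝒟, g, z', T, ε) is also (F, f)-valid. -/
open Set

/-- objective bound update rule: if `(𝒞, 𝒟, g, z, T, ε)` is
`(F, f)`-valid and `x ∈ ⋂𝒞` has `g x = z' < z`, then `(𝒞, 𝒟, g, z', T, ε)` is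
also `(F, f)`-valid. -/
theorem objective_bound_update {n : ℕ} (F : Set (Fin n → ℝ))
    (f : (Fin n → ℝ) → ℝ) (K : Config n) (hV : K.Valid F f)
    (x : Fin n → ℝ) (hx : x ∈ ⋂₀ K.core) (z' : ℝ)
    (hgx : K.g x = z') (hlt : (z' : WithTop ℝ) < K.z) :
    Config.Valid F f
      { core := K.core, derived := K.derived, g := K.g, z := (z' : WithTop ℝ),
        tree := K.tree, eps := K.eps } := by
  obtain ⟨hV1, hV2, hV3, hV4⟩ := hV
  refine ⟨hV1, ?_, ?_, ?_⟩
  · intro _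
    exact ((hV3 z' hlt).mpr ⟨x, hx, le_of_eq hgx⟩).imp
      (fun y ⟨hy, hfy⟩ => ⟨hy, WithTop.coe_le_coe.mpr hfy⟩)
  · intro zh hzh
    exact hV3 zh (lt_trans hzh hlt)
  · intro y hy hgy
    exact hV4 y hy (lt_trans hgy hlt)
end

section
/- (Transfer rule.) Let (𝒞, 𝒟, g, z, T, ε) be an (F, f)-valid configuration and let C ∈ 𝒟. Then (𝒞 ∪ {C}, 𝒟 \ {C}, g, z, T, ε) is also (F, f)-valid. -/
open Set

/-- transfer rule: if `(𝒞, 𝒟, g, z, T, ε)` is `(F, f)`-valid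
and `C ∈ 𝒟`, then `(𝒞 ∪ {C}, 𝒟 \ {C}, g, z, T, ε)` is also `(F, f)`-valid. -/
theorem transfer {n : ℕ} (F : Set (Fin n → ℝ)) (f : (Fin n → ℝ) → ℝ)
    (K : Config n) (hV : K.Valid F f) (C : Set (Fin n → ℝ)) (hC : C ∈ K.derived) :
    Config.Valid F f
      { core := insert C K.core, derived := K.derived \ {C}, g := K.g, z := K.z,
        tree := K.tree, eps := K.eps } := by
  obtain ⟨⟨⟨h3, h5, h6, h7⟩, hε⟩, hV2, hV3, hV4⟩ := hV
  have hsub : ⋂₀ (insert C K.core) ⊆ ⋂₀ K.core :=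
    sInter_subset_sInter (subset_insert _ _)
  have hunion : insert C K.core ∪ (K.derived \ {C}) = K.core ∪ K.derived := by
    ext S
    simp only [Set.mem_union, Set.mem_insert_iff, Set.mem_diff, Set.mem_singleton_iff]
    constructor
    · rintro ((rfl | h) | ⟨h, _⟩)
      · exact Or.inr hC
      · exact Or.inl h
      · exact Or.inr h
    · rintro (h | h)
      · exact Or.inl (Or.inr h)
      · by_cases hS : S = C
        · exact Or.inl (Or.inl hS)
        · exact Or.inr ⟨h, hS⟩
  have hregion : ∀ (w : K.tree.V),
      K.tree.region (insert C K.core) w = C ∩ K.tree.region K.core w := by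
    intro w
    simp [BranchingTree.region, Set.insert_union, Set.sInter_insert]
  refine ⟨⟨⟨?_, h5, ?_, h7⟩, hε⟩, hV2, ?_, ?_⟩
  · intro u hu
    exact (sInter_subset_sInter (subset_insert _ _)).trans (h3 u hu)
  · intro v i
    exact (h6 v i).mono (Set.image_mono hsub)
  · intro zh hzh
    constructor
    · intro hx
      obtain ⟨y, hy, hgy⟩ := (hV3 zh hzh).mp hx
      have hgyz : (K.g y : WithTop ℝ) < K.z :=
        lt_of_le_of_lt (by exact_mod_cast hgy) hzh
      obtain ⟨w, hw, _, hgw⟩ := hV4 y hy hgyz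
      refine ⟨w, sInter_subset_sInter ?_ hw, hgw.trans hgy⟩
      exact Set.insert_subset (Set.mem_union_right _ hC) Set.subset_union_left
    · intro ⟨x, hx, hgx⟩
      exact (hV3 zh hzh).mpr ⟨x, hsub hx, hgx⟩
  · intro x hx hgx
    have hxC : x ∈ C := hx C (Set.mem_insert _ _)
    obtain ⟨y, hy, ⟨v, ⟨hyv, hxv, hmax⟩, hlex⟩, hgy⟩ := hV4 x (hsub hx) hgx
    have hyC : y ∈ C := hy C (Set.mem_union_right _ hC)
    refine ⟨y, ?_, ⟨v, ⟨?_, ?_, ?_⟩, hlex⟩, hgy⟩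
    · rw [show insert C K.core ∪ (K.derived \ {C}) = K.core ∪ K.derived from hunion]
      exact hy
    · rw [hregion]; exact ⟨hyC, hyv⟩
    · rw [hregion]; exact ⟨hxC, hxv⟩
    · intro w hyw hxw
      rw [hregion] at hyw hxw
      exact hmax w hyw.2 hxw.2
end

section
/- (Deletion rule, redundant core constraint.) Let (𝒞, 𝒟, g, z, T, ε) be an (F, f)-valid configuration, let C ∈ 𝒞, set 𝒞' = 𝒞 \ {C}, and let 𝒟' ⊆ 𝒟. If C ⊇ ⋂𝒞', then (𝒞', 𝒟', g, z, T, ε) is also (F, f)-valid. -/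
open Set

/-- deletion rule, redundant core constraint: if
`(𝒞, 𝒟, g, z, T, ε)` is `(F, f)`-valid, `C ∈ 𝒞`, `𝒞' = 𝒞 \ {C}`, `𝒟' ⊆ 𝒟`,
and `C ⊇ ⋂𝒞'`, then `(𝒞', 𝒟', g, z, T, ε)` is also `(F, f)`-valid. -/
theorem deletion_redundant_core {n : ℕ} (F : Set (Fin n → ℝ))
    (f : (Fin n → ℝ) → ℝ) (K : Config n) (hV : K.Valid F f)
    (C : Set (Fin n → ℝ)) (hC : C ∈ K.core) (𝒟' : Set (Set (Fin n → ℝ)))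
    (h𝒟 : 𝒟' ⊆ K.derived) (hred : ⋂₀ (K.core \ {C}) ⊆ C) :
    Config.Valid F f
      { core := K.core \ {C}, derived := 𝒟', g := K.g, z := K.z,
        tree := K.tree, eps := K.eps } := by
  obtain ⟨⟨hcons, heps⟩, hV2, hV3, hV4⟩ := hV
  have hEq : ⋂₀ (K.core \ {C}) = ⋂₀ K.core := by
    apply subset_antisymm
    · intro x hx D hD
      by_cases hDC : D = C
      · exact hDC ▸ hred hx
      · exact hx D ⟨hD, hDC⟩
    · exact sInter_subset_sInter diff_subset
  have hreg : ∀ v : K.tree.V, K.tree.region (K.core \ {C}) v = K.tree.region K.core v := by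
    intro v
    unfold BranchingTree.region
    rw [sInter_union, sInter_union, hEq]
  have hdcn : ∀ v x y, K.tree.IsDCN (K.core \ {C}) v x y ↔ K.tree.IsDCN K.core v x y := by
    intro v x y
    unfold BranchingTree.IsDCN
    simp only [hreg]
  have hge : ∀ x y, K.tree.TreeGe (K.core \ {C}) K.eps x y ↔ K.tree.TreeGe K.core K.eps x y := by
    intro x y
    unfold BranchingTree.TreeGe
    simp only [hdcn]
  refine ⟨⟨?_, heps⟩, hV2, ?_, ?_⟩
  · unfold BranchingTree.Consistent at hcons ⊢
    simpa only [hEq] using hcons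
  · intro zh hzh
    simpa only [hEq] using hV3 zh hzh
  · intro x hx hgx
    have hx' : x ∈ ⋂₀ (K.core \ {C}) := hx
    rw [hEq] at hx'
    obtain ⟨y, hy, hyge, hygx⟩ := hV4 x hx' hgx
    refine ⟨y, ?_, (hge y x).mpr hyge, hygx⟩
    exact sInter_subset_sInter (union_subset_union diff_subset h𝒟) hy
end
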